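/- Let z ∈ Λ¹(Y, T*Y) be such that the associated matrix z_{ab} = (z_a)_b is antisymmetric, and let z denote also the 2-form (1/2) z_{ab} dx^{ab}. Then d_θ z_a = −(dz)_a + (1/2)(∇_a z_{bc}) dx^{bc}. If moreover z ∈ Λ²_14, then (d_θ z_a + (dz)_a) ⌟ φ = 0. -/

import Mathlib

open scoped BigOperators

namespace G2S

abbrev Idx : Type := Fin 7

/-- Components of a `k`-form on `Y` (values of the totally antisymmetric
coefficient array at each point of `Y`). -/
abbrev Form (Y : Type) (k : ℕ) : Type := (Fin k → Idx) → Y → ℝ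

noncomputable section

def sgn {n : ℕ} (σ : Equiv.Perm (Fin n)) : ℝ := ((Equiv.Perm.sign σ : ℤ) : ℝ)

/-- The components are totally antisymmetric. -/
def IsAlt {Y : Type} {k : ℕ} (α : Form Y k) : Prop :=
  ∀ (σ : Equiv.Perm (Fin k)) (v : Fin k → Idx), α (v ∘ σ) = sgn σ • α v

/-- Wedge product, in components. -/
def wedge {Y : Type} {k l : ℕ} (α : Form Y k) (β : Form Y l) : Form Y (k + l) :=
  fun v y => (1 / ((k.factorial : ℝ) * (l.factorial : ℝ))) *
    ∑ σ : Equiv.Perm (Fin (k + l)), sgn σ *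
      (α (fun i => v (σ (Fin.castAdd l i))) y * β (fun j => v (σ (Fin.natAdd k j))) y)

/-- `contr α a = α_a`, the `(k-1)`-form obtained by contracting the first index. -/
def contr {Y : Type} {k : ℕ} (α : Form Y (k + 1)) (a : Idx) : Form Y k :=
  fun v => α (Fin.cons a v)

/-- Metric contraction `α ⌟ β` (with the flat metric of an orthonormal frame). -/
def hook {Y : Type} {k m : ℕ} (α : Form Y k) (β : Form Y (k + m)) : Form Y m :=
  fun v y => (1 / (k.factorial : ℝ)) * ∑ w : Fin k → Idx, α w y * β (Fin.append w v) y

/-- Reindex a form along an equality of degrees. -/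
def castF {Y : Type} {k l : ℕ} (h : k = l) (α : Form Y k) : Form Y l :=
  fun v => α (fun i => v (Fin.cast h i))

/-- Insertion operator `i_M(α) = M^a ∧ α_a` of a `TY`-valued `p`-form `M`. -/
def insertF {Y : Type} {p k : ℕ} (M : Idx → Form Y p) (α : Form Y (k + 1)) :
    Form Y (p + k) :=
  fun v y => ∑ a : Idx, wedge (M a) (contr α a) v y

def kd (a b : Idx) : ℝ := if a = b then 1 else 0

/-- Levi-Civita symbol on seven indices. -/
def epsF (v : Fin 7 → Idx) : ℝ :=
  ∑ σ : Equiv.Perm (Fin 7), sgn σ * ∏ i : Fin 7, kd (v i) (σ i)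

def phiList : List ((Idx × Idx × Idx) × ℝ) :=
  [((0,1,2),1), ((0,3,4),1), ((0,5,6),1), ((1,3,5),1), ((1,4,6),-1), ((2,3,6),-1), ((2,4,5),-1)]

/-- Components of the standard `G₂` associative three-form `φ` on `ℝ⁷`
(`φ = e^{123}+e^{145}+e^{167}+e^{246}-e^{257}-e^{347}-e^{356}`). -/
def phiF (a b c : Idx) : ℝ :=
  ∑ σ : Equiv.Perm (Fin 3), sgn σ *
    (phiList.map (fun t =>
      if (![a,b,c] (σ 0), ![a,b,c] (σ 1), ![a,b,c] (σ 2)) = t.1 then t.2 else 0)).sum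

/-- Components of the coassociative four-form `ψ = *φ`. -/
def psiF (a b c d : Idx) : ℝ :=
  (1 / 6 : ℝ) * ∑ e : Idx, ∑ f : Idx, ∑ g : Idx,
    epsF ![a,b,c,d,e,f,g] * phiF e f g

def Phi (Y : Type) : Form Y 3 := fun v _ => phiF (v 0) (v 1) (v 2)

def Psi (Y : Type) : Form Y 4 := fun v _ => psiF (v 0) (v 1) (v 2) (v 3)

/-- Exterior derivative of a (scalar-valued) form, in components, where
`D f a` denotes the derivative of the function `f` along the `a`-th frame
vector field. -/
def dS {Y : Type} (D : (Y → ℝ) → Idx → Y → ℝ) {k : ℕ} (α : Form Y k) :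
    Form Y (k + 1) :=
  fun v y => ∑ i : Fin (k + 1), ((-1 : ℝ) ^ (i : ℕ)) *
    D (α (fun j => v (i.succAbove j))) (v i) y

/-- The connection one-form `θ_a{}^b = Γ_{ac}{}^b dx^c` associated to the
connection symbols `Γ` (with `Γ a c b = Γ_{ac}{}^b`). -/
def thetaOne {Y : Type} (Γ : Idx → Idx → Idx → Y → ℝ) (a b : Idx) : Form Y 1 :=
  fun v y => Γ a (v 0) b y

/-- Exterior covariant derivative `d_θ` on `TY`-valued forms:
`(d_θ M)^b = d(M^b) + θ_a{}^b ∧ M^a`. -/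
def dTheta {Y : Type} (D : (Y → ℝ) → Idx → Y → ℝ) (Γ : Idx → Idx → Idx → Y → ℝ)
    {p : ℕ} (M : Idx → Form Y p) : Idx → Form Y (p + 1) :=
  fun b => dS D (M b) + castF (show 1 + p = p + 1 by omega)
    ((fun v y => ∑ a : Idx, wedge (thetaOne Γ a b) (M a) v y) : Form Y (1 + p))

/-- Covariant derivative `∇_a` on the components of a `k`-form, determined by
the frame derivations `D` and connection symbols `Γ`. -/
def covD {Y : Type} (D : (Y → ℝ) → Idx → Y → ℝ) (Γ : Idx → Idx → Idx → Y → ℝ)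
    {k : ℕ} (a : Idx) (α : Form Y k) : Form Y k :=
  fun v y => D (α v) a y
    - ∑ j : Fin k, ∑ b : Idx, Γ a (v j) b y * α (Function.update v j b) y

/-- `d_θ` on a `T*Y`-valued one-form `z` (lower index):
`d_θ z_a = d(z_a) − θ_a{}^b ∧ z_b`. -/
def dThetaLow {Y : Type} (D : (Y → ℝ) → Idx → Y → ℝ)
    (Γ : Idx → Idx → Idx → Y → ℝ) (z : Idx → Form Y 1) (a : Idx) : Form Y 2 :=
  dS D (z a) - ((fun v y => ∑ e : Idx, wedge (thetaOne Γ a e) (z e) v y) : Form Y 2)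


-- === auxiliary ===

def phiListZ : List ((Idx × Idx × Idx) × ℤ) :=
  [((0,1,2),1), ((0,3,4),1), ((0,5,6),1), ((1,3,5),1), ((1,4,6),-1), ((2,3,6),-1), ((2,4,5),-1)]
def phiZ (a b c : Idx) : ℤ :=
  ∑ σ : Equiv.Perm (Fin 3), (Equiv.Perm.sign σ : ℤ) *
    (phiListZ.map (fun t =>
      if (![a,b,c] (σ 0), ![a,b,c] (σ 1), ![a,b,c] (σ 2)) = t.1 then t.2 else 0)).sum
def tbl0 : List ℤ := [0, 0, 0, 0, 0, 0, 0, 0, 0, 1, 0, 0, 0, 0, 0, -1, 0, 0, 0, 0, 0, 0, 0, 0, 0, 1, 0, 0, 0, 0, 0, -1, 0, 0, 0, 0, 0, 0, 0, 0, 0, 1, 0, 0, 0, 0, 0, -1, 0]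
def tbl1 : List ℤ := [0, 0, -1, 0, 0, 0, 0, 0, 0, 0, 0, 0, 0, 0, 1, 0, 0, 0, 0, 0, 0, 0, 0, 0, 0, 0, 1, 0, 0, 0, 0, 0, 0, 0, -1, 0, 0, 0, -1, 0, 0, 0, 0, 0, 0, 0, 1, 0, 0]
def tbl2 : List ℤ := [0, 1, 0, 0, 0, 0, 0, -1, 0, 0, 0, 0, 0, 0, 0, 0, 0, 0, 0, 0, 0, 0, 0, 0, 0, 0, 0, -1, 0, 0, 0, 0, 0, -1, 0, 0, 0, 0, 0, 1, 0, 0, 0, 0, 0, 1, 0, 0, 0]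
def tbl3 : List ℤ := [0, 0, 0, 0, -1, 0, 0, 0, 0, 0, 0, 0, -1, 0, 0, 0, 0, 0, 0, 0, 1, 0, 0, 0, 0, 0, 0, 0, 1, 0, 0, 0, 0, 0, 0, 0, 1, 0, 0, 0, 0, 0, 0, 0, -1, 0, 0, 0, 0]
def tbl4 : List ℤ := [0, 0, 0, 1, 0, 0, 0, 0, 0, 0, 0, 0, 0, 1, 0, 0, 0, 0, 0, 1, 0, -1, 0, 0, 0, 0, 0, 0, 0, 0, 0, 0, 0, 0, 0, 0, 0, -1, 0, 0, 0, 0, 0, -1, 0, 0, 0, 0, 0]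
def tbl5 : List ℤ := [0, 0, 0, 0, 0, 0, -1, 0, 0, 0, 1, 0, 0, 0, 0, 0, 0, 0, -1, 0, 0, 0, -1, 0, 0, 0, 0, 0, 0, 0, 1, 0, 0, 0, 0, 0, 0, 0, 0, 0, 0, 0, 1, 0, 0, 0, 0, 0, 0]
def tbl6 : List ℤ := [0, 0, 0, 0, 0, 1, 0, 0, 0, 0, 0, -1, 0, 0, 0, 0, 0, -1, 0, 0, 0, 0, 0, 1, 0, 0, 0, 0, 0, 1, 0, 0, 0, 0, 0, -1, 0, 0, 0, 0, 0, 0, 0, 0, 0, 0, 0, 0, 0]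
def phiT (a b c : Idx) : ℤ := (![tbl0,tbl1,tbl2,tbl3,tbl4,tbl5,tbl6] a).getD (b.val*7+c.val) 0
def kdZ (a b : Idx) : ℤ := if a = b then 1 else 0

lemma phiZ_eq_cast (a b c : Idx) : phiF a b c = ((phiZ a b c : ℤ) : ℝ) := by
  unfold phiF phiZ sgn phiList phiListZ
  push_cast
  congr 1; funext σ; congr 1
  simp only [List.map_cons, List.map_nil, List.sum_cons, List.sum_nil]
  push_cast
  ring

set_option maxRecDepth 40000 in
lemma phiZ_eq_phiT : ∀ a b c : Idx, phiZ a b c = phiT a b c := by decide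

lemma phiF_cast (a b c : Idx) : phiF a b c = ((phiT a b c : ℤ) : ℝ) := by
  rw [phiZ_eq_cast, phiZ_eq_phiT]

lemma kd_cast (a b : Idx) : kd a b = ((kdZ a b : ℤ) : ℝ) := by
  unfold kd kdZ; split <;> simp

set_option maxRecDepth 40000 in
lemma swap12Z : ∀ a b c : Idx, phiT a b c = -phiT b a c := by decide
set_option maxRecDepth 40000 in
lemma swap23Z : ∀ a b c : Idx, phiT a b c = -phiT a c b := by decide
set_option maxRecDepth 100000 in
lemma I1Z : ∀ b b' : Idx, (∑ c : Idx, ∑ d : Idx, phiT b c d * phiT b' c d) = 6 * kdZ b b' := by decide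
set_option maxRecDepth 100000 in
lemma KSymZ : ∀ b e c b' : Idx, (∑ d : Idx, (phiT b e d * phiT b' c d + phiT b' e d * phiT b c d))
    = 2 * kdZ b b' * kdZ e c - kdZ b c * kdZ e b' - kdZ b' c * kdZ e b := by decide

lemma phi12 (a b c : Idx) : phiF a b c = -phiF b a c := by
  rw [phiF_cast, phiF_cast, swap12Z a b c]; push_cast; ring
lemma phi23 (a b c : Idx) : phiF a b c = -phiF a c b := by
  rw [phiF_cast, phiF_cast, swap23Z a b c]; push_cast; ring
lemma I1R (b b' : Idx) : (∑ c : Idx, ∑ d : Idx, phiF b c d * phiF b' c d) = 6 * kd b b' := by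
  simp only [phiF_cast, kd_cast]
  exact_mod_cast I1Z b b'
lemma KSymR (b e c b' : Idx) :
    (∑ d : Idx, (phiF b e d * phiF b' c d + phiF b' e d * phiF b c d))
    = 2 * kd b b' * kd e c - kd b c * kd e b' - kd b' c * kd e b := by
  simp only [phiF_cast, kd_cast]
  exact_mod_cast KSymZ b e c b'


section
variable {Y : Type} (D : (Y → ℝ) → Idx → Y → ℝ)
variable (hD_add : ∀ (f g : Y → ℝ) (a : Idx), D (f + g) a = D f a + D g a)
variable (hD_mul : ∀ (f g : Y → ℝ) (a : Idx), D (f * g) a = f * D g a + g * D f a)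

include hD_add in
lemma D_zero (a : Idx) : D (fun _ => (0:ℝ)) a = fun _ => 0 := by
  have h := hD_add (fun _ => (0:ℝ)) (fun _ => (0:ℝ)) a
  have h2 : ((fun _ => (0:ℝ)) + (fun _ => (0:ℝ))) = (fun _ : Y => (0:ℝ)) := by
    funext y; simp [Pi.add_apply]
  rw [h2] at h
  funext y
  have := congrFun h y
  simp only [Pi.add_apply] at this
  linarith
include hD_mul in
lemma D_one (a : Idx) : D (fun _ => (1:ℝ)) a = fun _ => 0 := by
  have h := hD_mul (fun _ => (1:ℝ)) (fun _ => (1:ℝ)) a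
  have h2 : ((fun _ => (1:ℝ)) * (fun _ => (1:ℝ))) = (fun _ : Y => (1:ℝ)) := by
    funext y; simp [Pi.mul_apply]
  rw [h2] at h
  funext y
  have := congrFun h y
  simp only [Pi.mul_apply, Pi.add_apply] at this
  simp only [one_mul] at this
  linarith
include hD_add in
lemma D_neg (f : Y → ℝ) (a : Idx) : D (fun y => -(f y)) a = fun y => -(D f a y) := by
  have h := hD_add f (fun y => -(f y)) a
  have h2 : (f + (fun y => -(f y))) = (fun _ : Y => (0:ℝ)) := by funext y; simp
  rw [h2, D_zero D hD_add a] at h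
  funext y
  have := congrFun h y
  simp only [Pi.add_apply] at this
  have hf : f = (fun y => f y) := rfl
  linarith
include hD_add hD_mul in
lemma D_natconst (n : ℕ) (a : Idx) : D (fun _ => (n:ℝ)) a = fun _ => 0 := by
  induction n with
  | zero => simpa using D_zero D hD_add a
  | succ k ih =>
      rw [show (fun _ : Y => ((k+1:ℕ):ℝ)) = ((fun _ : Y => ((k:ℕ):ℝ)) + fun _ => (1:ℝ)) from by
        funext y; simp [Pi.add_apply]]
      rw [hD_add, ih, D_one D hD_mul a]
      funext y; simp
include hD_add hD_mul in
lemma D_intconst (n : ℤ) (a : Idx) : D (fun _ => (n:ℝ)) a = fun _ => 0 := by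
  cases n with
  | ofNat k => simpa using D_natconst D hD_add hD_mul k a
  | negSucc k =>
      rw [show (fun _ : Y => ((Int.negSucc k : ℤ):ℝ))
          = (fun y : Y => -((fun _ : Y => ((k+1:ℕ):ℝ)) y)) from by
        funext y; push_cast [Int.negSucc_eq]; ring]
      rw [D_neg D hD_add _ a, D_natconst D hD_add hD_mul (k+1) a]
      funext y; simp
include hD_add in
lemma D_sum {ι : Type*} (s : Finset ι) (g : ι → Y → ℝ) (a : Idx) :
    D (fun y => ∑ i ∈ s, g i y) a = fun y => ∑ i ∈ s, D (g i) a y := by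
  classical
  induction s using Finset.induction_on with
  | empty => simpa using D_zero D hD_add a
  | insert i s' hnot ih =>
      have h2 : (fun y => ∑ j ∈ insert i s', g j y)
          = (g i + fun y => ∑ j ∈ s', g j y) := by
        funext y; simp [Finset.sum_insert hnot]
      rw [h2, hD_add, ih]
      funext y
      simp [Finset.sum_insert hnot]
include hD_add hD_mul in
lemma D_mul_intconst (f : Y → ℝ) (n : ℤ) (a : Idx) :
    D (fun y => f y * (n:ℝ)) a = fun y => D f a y * (n:ℝ) := by
  have h2 : (fun y => f y * (n:ℝ)) = (f * fun _ => (n:ℝ)) := rfl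
  rw [h2, hD_mul, D_intconst D hD_add hD_mul n a]
  funext y; simp [Pi.add_apply]; ring
end

lemma sum_kd (f : Idx → ℝ) (b : Idx) : (∑ e : Idx, f e * kd e b) = f b := by
  simp [kd, Finset.sum_ite_eq']

lemma swapS23 (f : Idx → Idx → Idx → ℝ) :
    (∑ a : Idx, ∑ b : Idx, ∑ c : Idx, f a b c) = ∑ a : Idx, ∑ c : Idx, ∑ b : Idx, f a b c :=
  Finset.sum_congr rfl fun _ _ => Finset.sum_comm

lemma swapS12 (f : Idx → Idx → Idx → ℝ) :
    (∑ a : Idx, ∑ b : Idx, ∑ c : Idx, f a b c) = ∑ b : Idx, ∑ a : Idx, ∑ c : Idx, f a b c :=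
  Finset.sum_comm

lemma swapS13 (f : Idx → Idx → Idx → ℝ) :
    (∑ a : Idx, ∑ b : Idx, ∑ c : Idx, f a b c) = ∑ c : Idx, ∑ b : Idx, ∑ a : Idx, f a b c := by
  rw [swapS12, swapS23, swapS12]

lemma gamma_antisym (G : Idx → Idx → ℝ)
    (h : ∀ b c d : Idx, (∑ e : Idx,
      (G b e * phiF e c d + G c e * phiF b e d + G d e * phiF b c e)) = 0) :
    ∀ p q : Idx, G p q + G q p = 0 := by
  have key : ∀ b b' : Idx, 6 * G b b'
      + 2 * (∑ c : Idx, ∑ e : Idx, G c e * ∑ d : Idx, phiF b e d * phiF b' c d) = 0 := by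
    intro b b'
    have h0 : (0:ℝ) = ∑ c : Idx, ∑ d : Idx, phiF b' c d * ∑ e : Idx,
        (G b e * phiF e c d + G c e * phiF b e d + G d e * phiF b c e) := by
      simp [h]
    have hexp : (∑ c : Idx, ∑ d : Idx, phiF b' c d * ∑ e : Idx,
        (G b e * phiF e c d + G c e * phiF b e d + G d e * phiF b c e))
        = (∑ c : Idx, ∑ d : Idx, ∑ e : Idx, phiF b' c d * (G b e * phiF e c d))
        + (∑ c : Idx, ∑ d : Idx, ∑ e : Idx, phiF b' c d * (G c e * phiF b e d))
        + (∑ c : Idx, ∑ d : Idx, ∑ e : Idx, phiF b' c d * (G d e * phiF b c e)) := by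
      simp [Finset.mul_sum, mul_add, Finset.sum_add_distrib]
    have hA1 : (∑ c : Idx, ∑ d : Idx, ∑ e : Idx, phiF b' c d * (G b e * phiF e c d))
        = 6 * G b b' := by
      rw [swapS13 (fun c d e => phiF b' c d * (G b e * phiF e c d))]
      rw [swapS23 (fun e d c => phiF b' c d * (G b e * phiF e c d))]
      have : ∀ e : Idx, (∑ c : Idx, ∑ d : Idx, phiF b' c d * (G b e * phiF e c d))
          = G b e * (6 * kd e b') := by
        intro e
        rw [← I1R e b']
        rw [Finset.mul_sum]
        refine Finset.sum_congr rfl fun c _ => ?_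
        rw [Finset.mul_sum]
        exact Finset.sum_congr rfl fun d _ => by ring
      rw [Finset.sum_congr rfl fun e _ => this e]
      have := sum_kd (fun e => G b e * 6) b'
      calc (∑ e : Idx, G b e * (6 * kd e b')) = ∑ e : Idx, (G b e * 6) * kd e b' := by
            refine Finset.sum_congr rfl fun e _ => by ring
        _ = G b b' * 6 := sum_kd (fun e => G b e * 6) b'
        _ = 6 * G b b' := by ring
    have hA3 : (∑ c : Idx, ∑ d : Idx, ∑ e : Idx, phiF b' c d * (G d e * phiF b c e))
        = ∑ c : Idx, ∑ d : Idx, ∑ e : Idx, phiF b' c d * (G c e * phiF b e d) := by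
      rw [swapS12 (fun c d e => phiF b' c d * (G d e * phiF b c e))]
      refine Finset.sum_congr rfl fun c _ => Finset.sum_congr rfl fun d _ =>
        Finset.sum_congr rfl fun e _ => ?_
      rw [phi23 b' d c, phi23 b d e]
      ring
    have hU : (∑ c : Idx, ∑ d : Idx, ∑ e : Idx, phiF b' c d * (G c e * phiF b e d))
        = ∑ c : Idx, ∑ e : Idx, G c e * ∑ d : Idx, phiF b e d * phiF b' c d := by
      rw [swapS23 (fun c d e => phiF b' c d * (G c e * phiF b e d))]
      refine Finset.sum_congr rfl fun c _ => Finset.sum_congr rfl fun e _ => ?_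
      rw [Finset.mul_sum]
      exact Finset.sum_congr rfl fun d _ => by ring
    rw [hexp, hA1, hA3, hU] at h0
    linarith
  set tr : ℝ := ∑ c : Idx, G c c with htr
  have hsym : ∀ b b' : Idx, (∑ c : Idx, ∑ e : Idx, G c e * ∑ d : Idx, phiF b e d * phiF b' c d)
      + (∑ c : Idx, ∑ e : Idx, G c e * ∑ d : Idx, phiF b' e d * phiF b c d)
      = 2 * kd b b' * tr - G b b' - G b' b := by
    intro b b'
    have hcomb : (∑ c : Idx, ∑ e : Idx, G c e * ∑ d : Idx, phiF b e d * phiF b' c d)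
        + (∑ c : Idx, ∑ e : Idx, G c e * ∑ d : Idx, phiF b' e d * phiF b c d)
        = ∑ c : Idx, ∑ e : Idx, G c e *
            (2 * kd b b' * kd e c - kd b c * kd e b' - kd b' c * kd e b) := by
      rw [← Finset.sum_add_distrib]
      refine Finset.sum_congr rfl fun c _ => ?_
      rw [← Finset.sum_add_distrib]
      refine Finset.sum_congr rfl fun e _ => ?_
      rw [← KSymR b e c b', ← mul_add, ← Finset.sum_add_distrib]
    rw [hcomb]
    have hsplit : (∑ c : Idx, ∑ e : Idx, G c e *
        (2 * kd b b' * kd e c - kd b c * kd e b' - kd b' c * kd e b))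
        = (2 * kd b b') * (∑ c : Idx, ∑ e : Idx, G c e * kd e c)
          - (∑ c : Idx, kd b c * ∑ e : Idx, G c e * kd e b')
          - (∑ c : Idx, kd b' c * ∑ e : Idx, G c e * kd e b) := by
      rw [Finset.mul_sum, ← Finset.sum_sub_distrib, ← Finset.sum_sub_distrib]
      refine Finset.sum_congr rfl fun c _ => ?_
      rw [Finset.mul_sum, Finset.mul_sum, Finset.mul_sum, ← Finset.sum_sub_distrib,
        ← Finset.sum_sub_distrib]
      exact Finset.sum_congr rfl fun e _ => by ring
    rw [hsplit]
    have h1 : (∑ c : Idx, ∑ e : Idx, G c e * kd e c) = tr :=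
      Finset.sum_congr rfl fun c _ => sum_kd (fun e => G c e) c
    have kd_symm : ∀ x y : Idx, kd x y = kd y x := by
      intro x y; unfold kd
      by_cases hxy : x = y
      · simp [hxy]
      · rw [if_neg hxy, if_neg (fun hh => hxy hh.symm)]
    have h2 : (∑ c : Idx, kd b c * ∑ e : Idx, G c e * kd e b') = G b b' := by
      have : ∀ c : Idx, kd b c * (∑ e : Idx, G c e * kd e b') = G c b' * kd c b := by
        intro c
        rw [sum_kd (fun e => G c e) b', kd_symm b c]
        ring
      rw [Finset.sum_congr rfl fun c _ => this c]
      exact sum_kd (fun c => G c b') b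
    have h3 : (∑ c : Idx, kd b' c * ∑ e : Idx, G c e * kd e b) = G b' b := by
      have : ∀ c : Idx, kd b' c * (∑ e : Idx, G c e * kd e b) = G c b * kd c b' := by
        intro c
        rw [sum_kd (fun e => G c e) b, kd_symm b' c]
        ring
      rw [Finset.sum_congr rfl fun c _ => this c]
      exact sum_kd (fun c => G c b) b'
    rw [h1, h2, h3]
  -- derive S b b' = -(kd b b') * tr
  have hS : ∀ b b' : Idx, G b b' + G b' b = -(kd b b' * tr) := by
    intro b b'
    have k1 := key b b'
    have k2 := key b' b
    have hs := hsym b b'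
    have hs' : (∑ c : Idx, ∑ e : Idx, G c e * ∑ d : Idx, phiF b' e d * phiF b c d)
        = (2 * kd b b' * tr - G b b' - G b' b)
          - (∑ c : Idx, ∑ e : Idx, G c e * ∑ d : Idx, phiF b e d * phiF b' c d) := by
      linarith
    rw [hs'] at k2
    linarith
  have htr0 : tr = 0 := by
    have hsum : (∑ b : Idx, (G b b + G b b)) = ∑ b : Idx, -(kd b b * tr) :=
      Finset.sum_congr rfl fun b _ => hS b b
    have h2tr : (∑ b : Idx, (G b b + G b b)) = 2 * tr := by
      rw [htr, Finset.mul_sum]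
      exact Finset.sum_congr rfl fun b _ => by ring
    have hrhs : (∑ b : Idx, -(kd b b * tr)) = -(7 * tr) := by
      have : ∀ b : Idx, -(kd b b * tr) = -tr := by intro b; simp [kd]
      rw [Finset.sum_congr rfl fun b _ => this b]
      rw [Finset.sum_const]
      simp [Finset.card_univ, nsmul_eq_mul]
    rw [h2tr, hrhs] at hsum
    linarith
  intro p q
  rw [hS p q, htr0]
  ring

lemma contraction_zero (G Z : Idx → Idx → ℝ)
    (hG : ∀ b c d : Idx, (∑ e : Idx,
      (G b e * phiF e c d + G c e * phiF b e d + G d e * phiF b c e)) = 0)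
    (hZ : ∀ p q : Idx, Z p q = -Z q p)
    (hF : ∀ d : Idx, (∑ p : Idx, ∑ q : Idx, Z p q * phiF p q d) = 0) (c : Idx) :
    (∑ b : Idx, ∑ q : Idx, (∑ e : Idx, (G b e * Z e q + G q e * Z b e)) * phiF b q c) = 0 := by
  have hanti := gamma_antisym G hG
  -- split
  have hsplit : (∑ b : Idx, ∑ q : Idx, (∑ e : Idx, (G b e * Z e q + G q e * Z b e)) * phiF b q c)
      = (∑ b : Idx, ∑ q : Idx, ∑ e : Idx, G b e * Z e q * phiF b q c)
      + (∑ b : Idx, ∑ q : Idx, ∑ e : Idx, G q e * Z b e * phiF b q c) := by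
    rw [← Finset.sum_add_distrib]
    refine Finset.sum_congr rfl fun b _ => ?_
    rw [← Finset.sum_add_distrib]
    refine Finset.sum_congr rfl fun q _ => ?_
    rw [Finset.sum_mul, ← Finset.sum_add_distrib]
    exact Finset.sum_congr rfl fun e _ => by ring
  -- T2 = T1
  have hT2 : (∑ b : Idx, ∑ q : Idx, ∑ e : Idx, G q e * Z b e * phiF b q c)
      = ∑ b : Idx, ∑ q : Idx, ∑ e : Idx, G b e * Z e q * phiF b q c := by
    rw [swapS12 (fun b q e => G q e * Z b e * phiF b q c)]
    refine Finset.sum_congr rfl fun b _ => Finset.sum_congr rfl fun q _ =>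
      Finset.sum_congr rfl fun e _ => ?_
    rw [hZ q e, phi12 q b c]
    ring
  -- S1 = 0
  have hS1 : (∑ p : Idx, ∑ q : Idx, ∑ e : Idx, Z p q * (G p e * phiF e q c)) = 0 := by
    have h0 : (0:ℝ) = ∑ p : Idx, ∑ q : Idx, Z p q * ∑ e : Idx,
        (G p e * phiF e q c + G q e * phiF p e c + G c e * phiF p q e) := by
      simp [hG]
    have hexp : (∑ p : Idx, ∑ q : Idx, Z p q * ∑ e : Idx,
        (G p e * phiF e q c + G q e * phiF p e c + G c e * phiF p q e))
        = (∑ p : Idx, ∑ q : Idx, ∑ e : Idx, Z p q * (G p e * phiF e q c))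
        + (∑ p : Idx, ∑ q : Idx, ∑ e : Idx, Z p q * (G q e * phiF p e c))
        + (∑ p : Idx, ∑ q : Idx, ∑ e : Idx, Z p q * (G c e * phiF p q e)) := by
      simp [Finset.mul_sum, mul_add, Finset.sum_add_distrib]
    have hS2 : (∑ p : Idx, ∑ q : Idx, ∑ e : Idx, Z p q * (G q e * phiF p e c))
        = ∑ p : Idx, ∑ q : Idx, ∑ e : Idx, Z p q * (G p e * phiF e q c) := by
      rw [swapS12 (fun p q e => Z p q * (G q e * phiF p e c))]
      refine Finset.sum_congr rfl fun p _ => Finset.sum_congr rfl fun q _ =>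
        Finset.sum_congr rfl fun e _ => ?_
      rw [hZ q p, phi12 q e c]
      ring
    have hS3 : (∑ p : Idx, ∑ q : Idx, ∑ e : Idx, Z p q * (G c e * phiF p q e)) = 0 := by
      rw [swapS13 (fun p q e => Z p q * (G c e * phiF p q e))]
      rw [show (∑ e : Idx, ∑ q : Idx, ∑ p : Idx, Z p q * (G c e * phiF p q e))
          = ∑ e : Idx, G c e * (∑ p : Idx, ∑ q : Idx, Z p q * phiF p q e) from
        Finset.sum_congr rfl fun e _ => by
          rw [Finset.mul_sum, Finset.sum_comm]
          refine Finset.sum_congr rfl fun p _ => ?_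
          rw [Finset.mul_sum]
          exact Finset.sum_congr rfl fun q _ => by ring]
      simp [hF]
    rw [hexp, hS2, hS3] at h0
    linarith
  -- T1 = -S1
  have hT1 : (∑ b : Idx, ∑ q : Idx, ∑ e : Idx, G b e * Z e q * phiF b q c)
      = -(∑ p : Idx, ∑ q : Idx, ∑ e : Idx, Z p q * (G p e * phiF e q c)) := by
    rw [swapS13 (fun b q e => G b e * Z e q * phiF b q c)]
    rw [← Finset.sum_neg_distrib]
    refine Finset.sum_congr rfl fun e _ => ?_
    rw [← Finset.sum_neg_distrib]
    refine Finset.sum_congr rfl fun q _ => ?_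
    rw [← Finset.sum_neg_distrib]
    refine Finset.sum_congr rfl fun b _ => ?_
    have := hanti b e
    have hGbe : G b e = -G e b := by linarith
    rw [hGbe]
    ring
  rw [hsplit, hT2, hT1, hS1]
  ring

/-- Let `z ∈ Λ¹(Y,T*Y)` with antisymmetric matrix
`z_{ab} = (z_a)_b`, and let `zz` denote the associated two-form. Then
`d_θ z_a = −(dz)_a + (1/2)(∇_a z_{bc}) dx^{bc}`; and if moreover `z ∈ Λ²₁₄`
then `(d_θ z_a + (dz)_a) ⌟ φ = 0`. -/
theorem antisymmetric_one_form_identities {Y : Type}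
    (D : (Y → ℝ) → Idx → Y → ℝ)
    (hD_add : ∀ (f g : Y → ℝ) (a : Idx), D (f + g) a = D f a + D g a)
    (hD_mul : ∀ (f g : Y → ℝ) (a : Idx), D (f * g) a = f * D g a + g * D f a)
    (Γ : Idx → Idx → Idx → Y → ℝ)
    -- `∇` is compatible with the `G₂` structure (the standard `φ` in this frame):
    (hcompat : ∀ (a b c d : Idx) (y : Y),
      ∑ e : Idx, (Γ a b e y * phiF e c d + Γ a c e y * phiF b e d
        + Γ a d e y * phiF b c e) = 0)
    (z : Idx → Form Y 1)
    (hz_anti : ∀ (a b : Idx) (y : Y), z a ![b] y = -(z b ![a] y)) :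
    (∀ a : Idx,
      dThetaLow D Γ z a
        = -(contr (dS D ((fun v y => z (v 0) ![v 1] y) : Form Y 2)) a)
          + (fun v y =>
              D (fun y' => z (v 0) ![v 1] y') a y
                - ∑ e : Idx, (Γ a (v 0) e y * z e ![v 1] y
                    + Γ a (v 1) e y * z (v 0) ![e] y)))
    ∧ (hook (k := 2) (m := 1) ((fun v y => z (v 0) ![v 1] y) : Form Y 2) (Phi Y) = 0 →
        ∀ a : Idx,
          hook (k := 2) (m := 1)
            (dThetaLow D Γ z a
              + contr (dS D ((fun v y => z (v 0) ![v 1] y) : Form Y 2)) a)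
            (Phi Y) = 0)     := by
  classical
  -- ==== Part 1 ====
  have perm2 : ∀ (f : Equiv.Perm (Fin 2) → ℝ),
      (∑ σ : Equiv.Perm (Fin 2), f σ) = f 1 + f (Equiv.swap 0 1) := by
    intro f
    rw [show (Finset.univ : Finset (Equiv.Perm (Fin 2))) = {1, Equiv.swap 0 1} from by decide]
    rw [Finset.sum_insert (by decide), Finset.sum_singleton]
  have key1 : ∀ a : Idx,
      dThetaLow D Γ z a
        = -(contr (dS D ((fun v y => z (v 0) ![v 1] y) : Form Y 2)) a)
          + (fun v y =>
              D (fun y' => z (v 0) ![v 1] y') a y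
                - ∑ e : Idx, (Γ a (v 0) e y * z e ![v 1] y
                    + Γ a (v 1) e y * z (v 0) ![e] y)) := by
    intro a
    funext v y
    have hsub : dThetaLow D Γ z a v y
        = dS D (z a) v y - ∑ e : Idx, wedge (thetaOne Γ a e) (z e) v y := rfl
    have hdS : dS D (z a) v y
        = D (z a ![v 1]) (v 0) y - D (z a ![v 0]) (v 1) y := by
      unfold dS
      rw [Fin.sum_univ_two]
      rw [show (fun j : Fin 1 => v ((0:Fin 2).succAbove j)) = ![v 1] from by
        funext j; fin_cases j; rfl]
      rw [show (fun j : Fin 1 => v ((1:Fin 2).succAbove j)) = ![v 0] from by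
        funext j; fin_cases j; rfl]
      norm_num
      ring
    have hw : ∀ e : Idx, wedge (thetaOne Γ a e) (z e) v y
        = Γ a (v 0) e y * z e ![v 1] y - Γ a (v 1) e y * z e ![v 0] y := by
      intro e
      unfold wedge thetaOne
      rw [perm2]
      simp only []
      rw [show (fun j : Fin 1 => v (((1 : Equiv.Perm (Fin 2))) (Fin.natAdd 1 j))) = ![v 1] from by
        funext j; fin_cases j; rfl]
      rw [show (fun j : Fin 1 => v ((Equiv.swap (0:Fin 2) 1) (Fin.natAdd 1 j))) = ![v 0] from by
        funext j; fin_cases j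
        simp only [Matrix.cons_val_fin_one]
        exact congrArg v (by decide)]
      rw [show v ((1 : Equiv.Perm (Fin 2)) (Fin.castAdd 1 0)) = v 0 from rfl]
      rw [show v ((Equiv.swap (0:Fin 2) 1) (Fin.castAdd 1 0)) = v 1 from congrArg v (by decide)]
      rw [show sgn (1 : Equiv.Perm (Fin 2)) = 1 from by simp [sgn]]
      rw [show sgn (Equiv.swap (0:Fin 2) 1) = -1 from by
        simp [sgn, Equiv.Perm.sign_swap (by decide : (0:Fin 2) ≠ 1)]]
      norm_num [Nat.factorial]
      ring
    have hrhs : (-(contr (dS D ((fun v y => z (v 0) ![v 1] y) : Form Y 2)) a)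
          + ((fun v y =>
              D (fun y' => z (v 0) ![v 1] y') a y
                - ∑ e : Idx, (Γ a (v 0) e y * z e ![v 1] y
                    + Γ a (v 1) e y * z (v 0) ![e] y)) : Form Y 2)) v y
        = -(dS D ((fun v y => z (v 0) ![v 1] y) : Form Y 2) (Fin.cons a v) y)
          + (D (fun y' => z (v 0) ![v 1] y') a y
                - ∑ e : Idx, (Γ a (v 0) e y * z e ![v 1] y
                    + Γ a (v 1) e y * z (v 0) ![e] y)) := rfl
    have hdS3 : dS D ((fun v y => z (v 0) ![v 1] y) : Form Y 2) (Fin.cons a v) y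
        = D (fun y' => z (v 0) ![v 1] y') a y
          - D (fun y' => z a ![v 1] y') (v 0) y
          + D (fun y' => z a ![v 0] y') (v 1) y := by
      unfold dS
      rw [Fin.sum_univ_three]
      show (-1:ℝ)^((0:Fin 3):ℕ) * D (fun y' => z (v 0) ![v 1] y') a y
         + (-1:ℝ)^((1:Fin 3):ℕ) * D (fun y' => z a ![v 1] y') (v 0) y
         + (-1:ℝ)^((2:Fin 3):ℕ) * D (fun y' => z a ![v 0] y') (v 1) y = _
      norm_num
      ring
    rw [hsub, hdS, hrhs, hdS3]
    rw [Finset.sum_congr rfl fun e _ => hw e]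
    rw [show (∑ e : Idx, (Γ a (v 0) e y * z e ![v 1] y + Γ a (v 1) e y * z (v 0) ![e] y))
        = ∑ e : Idx, (Γ a (v 0) e y * z e ![v 1] y - Γ a (v 1) e y * z e ![v 0] y) from
      Finset.sum_congr rfl fun e _ => by rw [hz_anti (v 0) e]; ring]
    ring
  refine ⟨key1, ?_⟩
  -- ==== Part 2 ====
  intro h14 a
  have sum_fin2 : ∀ (f : (Fin 2 → Idx) → ℝ),
      (∑ w : Fin 2 → Idx, f w) = ∑ b : Idx, ∑ q : Idx, f ![b, q] := by
    intro f
    rw [← (finTwoArrowEquiv Idx).symm.sum_comp f, Fintype.sum_prod_type]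
    simp [finTwoArrowEquiv]
  -- pointwise vanishing of F
  have hFz : ∀ (d : Idx) (y' : Y),
      (∑ b : Idx, ∑ q : Idx, z b ![q] y' * phiF b q d) = 0 := by
    intro d y'
    have h3 : (1/((Nat.factorial 2 : ℕ):ℝ)) *
        (∑ b : Idx, ∑ q : Idx, z b ![q] y' * phiF b q d) = (0:ℝ) := by
      have h := congrFun (congrFun h14 ![d]) y'
      unfold hook at h
      rw [sum_fin2] at h
      exact h
    have : ((Nat.factorial 2 : ℕ):ℝ) ≠ 0 := by norm_num [Nat.factorial]
    field_simp at h3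
    simpa using h3
  rw [key1 a]
  have harg : (-(contr (dS D ((fun v y => z (v 0) ![v 1] y) : Form Y 2)) a)
          + ((fun v y =>
              D (fun y' => z (v 0) ![v 1] y') a y
                - ∑ e : Idx, (Γ a (v 0) e y * z e ![v 1] y
                    + Γ a (v 1) e y * z (v 0) ![e] y)) : Form Y 2)
          + contr (dS D ((fun v y => z (v 0) ![v 1] y) : Form Y 2)) a)
      = ((fun v y =>
              D (fun y' => z (v 0) ![v 1] y') a y
                - ∑ e : Idx, (Γ a (v 0) e y * z e ![v 1] y
                    + Γ a (v 1) e y * z (v 0) ![e] y)) : Form Y 2) := by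
    funext w yy
    show -(contr (dS D ((fun v y => z (v 0) ![v 1] y) : Form Y 2)) a w yy)
        + (D (fun y' => z (w 0) ![w 1] y') a yy
            - ∑ e : Idx, (Γ a (w 0) e yy * z e ![w 1] yy
                + Γ a (w 1) e yy * z (w 0) ![e] yy))
        + contr (dS D ((fun v y => z (v 0) ![v 1] y) : Form Y 2)) a w yy = _
    ring
  rw [harg]
  funext u yy
  unfold hook
  rw [sum_fin2]
  show (1/((Nat.factorial 2 : ℕ):ℝ)) *
      (∑ b : Idx, ∑ q : Idx,
        (D (fun y' => z b ![q] y') a yy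
          - ∑ e : Idx, (Γ a b e yy * z e ![q] yy + Γ a q e yy * z b ![e] yy))
          * phiF b q (u 0)) = (0:ℝ)
  have hsplit : (∑ b : Idx, ∑ q : Idx,
        (D (fun y' => z b ![q] y') a yy
          - ∑ e : Idx, (Γ a b e yy * z e ![q] yy + Γ a q e yy * z b ![e] yy))
          * phiF b q (u 0))
      = (∑ b : Idx, ∑ q : Idx, D (fun y' => z b ![q] y') a yy * phiF b q (u 0))
        - (∑ b : Idx, ∑ q : Idx,
            (∑ e : Idx, (Γ a b e yy * z e ![q] yy + Γ a q e yy * z b ![e] yy))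
            * phiF b q (u 0)) := by
    rw [← Finset.sum_sub_distrib]
    refine Finset.sum_congr rfl fun b _ => ?_
    rw [← Finset.sum_sub_distrib]
    exact Finset.sum_congr rfl fun q _ => by ring
  rw [hsplit]
  -- Γ part vanishes
  have hGamma : (∑ b : Idx, ∑ q : Idx,
      (∑ e : Idx, (Γ a b e yy * z e ![q] yy + Γ a q e yy * z b ![e] yy))
      * phiF b q (u 0)) = 0 := by
    exact contraction_zero (fun b e => Γ a b e yy) (fun b q => z b ![q] yy)
      (fun b c d => hcompat a b c d yy) (fun p q => hz_anti p q yy)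
      (fun d => hFz d yy) (u 0)
  -- D part vanishes
  have e2 : ∀ b q : Idx, D (fun y' => z b ![q] y' * phiF b q (u 0)) a
      = fun y'' => D (fun y' => z b ![q] y') a y'' * phiF b q (u 0) := by
    intro b q
    rw [phiF_cast b q (u 0)]
    exact D_mul_intconst D hD_add hD_mul (z b ![q]) (phiT b q (u 0)) a
  have hSD : (∑ b : Idx, ∑ q : Idx,
      D (fun y' => z b ![q] y') a yy * phiF b q (u 0)) = 0 := by
    have e1 : D (fun y' => ∑ b : Idx, ∑ q : Idx, z b ![q] y' * phiF b q (u 0)) a yy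
        = ∑ b : Idx, ∑ q : Idx, D (fun y' => z b ![q] y') a yy * phiF b q (u 0) := by
      rw [D_sum D hD_add Finset.univ
        (fun b y' => ∑ q : Idx, z b ![q] y' * phiF b q (u 0)) a]
      show (∑ b : Idx, D (fun y' => ∑ q : Idx, z b ![q] y' * phiF b q (u 0)) a yy) = _
      refine Finset.sum_congr rfl fun b _ => ?_
      rw [D_sum D hD_add Finset.univ (fun q y' => z b ![q] y' * phiF b q (u 0)) a]
      show (∑ q : Idx, D (fun y' => z b ![q] y' * phiF b q (u 0)) a yy) = _
      refine Finset.sum_congr rfl fun q _ => ?_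
      rw [e2 b q]
    rw [← e1]
    rw [show (fun y' => ∑ b : Idx, ∑ q : Idx, z b ![q] y' * phiF b q (u 0))
        = (fun _ : Y => (0:ℝ)) from funext (fun y' => hFz (u 0) y')]
    rw [D_zero D hD_add a]
  rw [hGamma, hSD]
  ring



end
end G2S
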